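/- Let A be a Banach algebra and φ a non-zero multiplicative linear functional on A such that the norm-closure of the linear span of products A·ker(φ) equals ker(φ). If A is left φ-biflat, then A is left φ-amenable. -/

import Mathlib

/-!
We realize the bidual `(B ⊗_p B)**` of the projective tensor product of a Banach algebra `B`
with itself canonically as the dual of the Banach space `B →L[ℂ] B* ` of bounded bilinear
forms on `B` (the latter being isometrically isomorphic to `(B ⊗_p B)*`).  All the canonical
Banach `B`-bimodule actions are spelled out explicitly through this identification.
The multiplication of the Banach algebra `B` is encoded as a bounded bilinear map
`μ : B →L[ℂ] B →L[ℂ] B` (for a Banach algebra `A`, `μ = ContinuousLinearMap.mul ℂ A`).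
-/

noncomputable section

open ContinuousLinearMap NormedSpace

/-- The space of bounded bilinear forms on `B`, canonically the dual of the projective
tensor product `B ⊗_p B`. -/
abbrev BilForm (B : Type*) [NormedAddCommGroup B] [NormedSpace ℂ B] : Type _ :=
  B →L[ℂ] StrongDual ℂ B

instance (B : Type*) [NormedAddCommGroup B] [NormedSpace ℂ B] : NormedAddCommGroup (BilForm B) :=
  inferInstanceAs (NormedAddCommGroup (B →L[ℂ] StrongDual ℂ B))

instance (B : Type*) [NormedAddCommGroup B] [NormedSpace ℂ B] : NormedSpace ℂ (BilForm B) :=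
  inferInstanceAs (NormedSpace ℂ (B →L[ℂ] StrongDual ℂ B))

/-- The bidual of the projective tensor product `B ⊗_p B`, realized canonically as the dual of
the Banach space of bounded bilinear forms on `B`. -/
abbrev TensorBidual (B : Type*) [NormedAddCommGroup B] [NormedSpace ℂ B] : Type _ :=
  StrongDual ℂ (BilForm B)

/-- The bidual `B**` of a normed space `B`. -/
abbrev Bidual (B : Type*) [NormedAddCommGroup B] [NormedSpace ℂ B] : Type _ :=
  StrongDual ℂ (StrongDual ℂ B)

variable {B : Type*} [NormedAddCommGroup B] [NormedSpace ℂ B]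

/-- The left action of `a ∈ B` (with multiplication `μ`) on `(B ⊗_p B)**`:
`(a • T) β = T ((x, y) ↦ β (a x, y))`, the canonical bidual extension of the
`B`-bimodule action `a • (x ⊗ y) = (a x) ⊗ y` on `B ⊗_p B`. -/
def tensorLSmul (μ : B →L[ℂ] B →L[ℂ] B) (a : B) (T : TensorBidual B) : TensorBidual B :=
  T.comp ((compL ℂ B B (StrongDual ℂ B)).flip (μ a))

/-- The right action of `a ∈ B` on `(B ⊗_p B)**`:
`(T • a) β = T ((x, y) ↦ β (x, y a))`, the canonical bidual extension of the
`B`-bimodule action `(x ⊗ y) • a = x ⊗ (y a)` on `B ⊗_p B`. -/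
def tensorRSmul (μ : B →L[ℂ] B →L[ℂ] B) (T : TensorBidual B) (a : B) : TensorBidual B :=
  T.comp (compL ℂ B (StrongDual ℂ B) (StrongDual ℂ B) ((compL ℂ B B ℂ).flip (μ.flip a)))

/-- `π_B^* ψ`, the image of a functional `ψ ∈ B*` under the adjoint of the product
morphism `π_B : B ⊗_p B → B`; as a bilinear form it is `(x, y) ↦ ψ (x y)`.  Thus
`π_B** T ψ = T (piDual μ ψ)` for `T ∈ (B ⊗_p B)**`. -/
def piDual (μ : B →L[ℂ] B →L[ℂ] B) (ψ : StrongDual ℂ B) : BilForm B :=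
  (compL ℂ B B ℂ ψ).comp μ

/-- The left action of `a ∈ B` on the bidual `B**`: `(a • m) f = m (f ∘ (a * ·))`. -/
def bidualLSmul (μ : B →L[ℂ] B →L[ℂ] B) (a : B) (m : Bidual B) : Bidual B :=
  m.comp ((compL ℂ B B ℂ).flip (μ a))

/-- A Banach algebra `B` (with multiplication `μ` and a multiplicative functional `ψ`) is
*left `ψ`-biflat* if there is a bounded linear map `ρ : B → (B ⊗_p B)**` with
`ρ (a b) = ψ (b) ρ (a) = a • ρ (b)` for all `a, b ∈ B`, and `ψ̃ ∘ π_B** ∘ ρ = ψ`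
(note `(ψ̃ ∘ π_B**) T = T (piDual μ ψ)`). -/
def IsLeftBiflat (μ : B →L[ℂ] B →L[ℂ] B) (ψ : StrongDual ℂ B) : Prop :=
  ∃ ρ : B →L[ℂ] TensorBidual B,
    (∀ a b : B, ρ (μ a b) = ψ b • ρ a ∧ ρ (μ a b) = tensorLSmul μ a (ρ b)) ∧
    ∀ a : B, ρ a (piDual μ ψ) = ψ a

/-- A Banach algebra `B` is *left `ψ`-amenable* if there is `m ∈ B**` with
`a • m = ψ (a) m` for all `a ∈ B` and `ψ̃ (m) = m (ψ) = 1`. -/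
def IsLeftAmenable (μ : B →L[ℂ] B →L[ℂ] B) (ψ : StrongDual ℂ B) : Prop :=
  ∃ m : Bidual B, (∀ (a : B) (f : StrongDual ℂ B), m (f.comp (μ a)) = ψ a * m f) ∧ m ψ = 1

variable {A : Type*} [NonUnitalNormedRing A] [NormedSpace ℂ A]
  [IsScalarTower ℂ A A] [SMulCommClass ℂ A A] [CompleteSpace A]

set_option maxHeartbeats 1000000 in
/-- Lemma 2.1: if `A` is a Banach algebra, `φ` a non-zero multiplicative
linear functional on `A` such that the norm-closure of the linear span of the set of
products `A · ker φ` equals `ker φ`, and `A` is left `φ`-biflat, then `A` is left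
`φ`-amenable. -/
theorem left_phi_biflat_implies_left_phi_amenable
    (φ : A →L[ℂ] ℂ) (hφ_ne : φ ≠ 0)
    (hφ_mul : ∀ a b : A, φ (a * b) = φ a * φ b)
    (hker : closure (Submodule.span ℂ {x : A | ∃ a l : A, φ l = 0 ∧ x = a * l} : Set A)
      = {x : A | φ x = 0})
    (hbf : IsLeftBiflat (ContinuousLinearMap.mul ℂ A) φ) :
    IsLeftAmenable (ContinuousLinearMap.mul ℂ A) φ := by
  classical
  obtain ⟨ρ, hρ, hρπ⟩ := hbf
  set μ : A →L[ℂ] A →L[ℂ] A := ContinuousLinearMap.mul ℂ A with hμ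
  -- choose a₀ with φ a₀ = 1
  obtain ⟨x, hx⟩ : ∃ x : A, φ x ≠ 0 := by
    by_contra h
    push_neg at h
    exact hφ_ne (by ext a; simp [h a])
  set a₀ : A := (φ x)⁻¹ • x with ha₀
  have hφa₀ : φ a₀ = 1 := by
    simp [ha₀, inv_mul_cancel₀ hx]
  -- the adjoint of the product morphism, as a continuous linear map
  set piD : StrongDual ℂ A →L[ℂ] BilForm A :=
    ((compL ℂ A (A →L[ℂ] A) (StrongDual ℂ A)).flip μ).comp (compL ℂ A A ℂ) with hpiD
  have hpiD_eq : ∀ ψ : StrongDual ℂ A, piD ψ = piDual μ ψ := fun ψ => rfl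
  -- key vanishing: for each bilinear form β, the functional a ↦ ρ a β vanishes on ker φ
  have gS : ∀ (β : BilForm A) (k : A), φ k = 0 → ρ k β = 0 := by
    intro β k hk
    set g : A →L[ℂ] ℂ := (ContinuousLinearMap.apply ℂ ℂ β).comp ρ with hg
    have hgdef : ∀ b : A, g b = ρ b β := fun b => rfl
    have hspan : ∀ y ∈ Submodule.span ℂ {x : A | ∃ a l : A, φ l = 0 ∧ x = a * l}, g y = 0 := by
      intro y hy
      induction hy using Submodule.span_induction with
      | mem z hz =>
        obtain ⟨a, l, hl, rfl⟩ := hz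
        have h1 : ρ (μ a l) = φ l • ρ a := (hρ a l).1
        have h2 : μ a l = a * l := rfl
        rw [hgdef, ← h2, h1]
        simp [hl]
      | zero => simp
      | add u v _ _ hu hv => rw [map_add, hu, hv, add_zero]
      | smul c u _ hu => rw [map_smul, hu, smul_zero]
    have hsub : (Submodule.span ℂ {x : A | ∃ a l : A, φ l = 0 ∧ x = a * l} : Set A)
        ⊆ g ⁻¹' {0} := fun y hy => hspan y hy
    have hcl : closure (Submodule.span ℂ {x : A | ∃ a l : A, φ l = 0 ∧ x = a * l} : Set A)
        ⊆ g ⁻¹' {0} := closure_minimal hsub (isClosed_singleton.preimage g.continuous)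
    have hkmem : k ∈ closure
        (Submodule.span ℂ {x : A | ∃ a l : A, φ l = 0 ∧ x = a * l} : Set A) := by
      rw [hker]; exact hk
    exact hcl hkmem
  -- consequence: ρ b β = φ b * ρ a₀ β for all b, β
  have key : ∀ (β : BilForm A) (b : A), ρ b β = φ b * ρ a₀ β := by
    intro β b
    have hk : φ (b - φ b • a₀) = 0 := by
      rw [map_sub, map_smul, hφa₀]
      simp
    have h0 : ρ (b - φ b • a₀) β = 0 := gS β _ hk
    have hb : (φ b • a₀) + (b - φ b • a₀) = b := by abel
    calc ρ b β = ρ ((φ b • a₀) + (b - φ b • a₀)) β := by rw [hb]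
      _ = ρ (φ b • a₀) β + ρ (b - φ b • a₀) β := by rw [map_add]; rfl
      _ = φ b * ρ a₀ β := by rw [h0, add_zero, map_smul]; rfl
  refine ⟨(ρ a₀).comp piD, ?_, ?_⟩
  · intro a f
    have h1 : piD (f.comp (μ a)) = (piD f).comp (μ a) := by
      ext y z
      simp only [hpiD_eq, piDual, ContinuousLinearMap.comp_apply, compL_apply]
      show f (μ a (μ y z)) = f (μ (μ a y) z)
      simp [hμ, mul_assoc]
    have h2 : ρ a₀ ((piD f).comp (μ a)) = tensorLSmul μ a (ρ a₀) (piD f) := rfl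
    have h3 : tensorLSmul μ a (ρ a₀) = ρ (μ a a₀) := ((hρ a a₀).2).symm
    have h4 : ρ (μ a a₀) = φ a₀ • ρ a := (hρ a a₀).1
    calc ((ρ a₀).comp piD) (f.comp (μ a))
        = ρ a₀ (piD (f.comp (μ a))) := rfl
      _ = ρ a₀ ((piD f).comp (μ a)) := by rw [h1]
      _ = tensorLSmul μ a (ρ a₀) (piD f) := h2
      _ = ρ (μ a a₀) (piD f) := by rw [h3]
      _ = (φ a₀ • ρ a) (piD f) := by rw [h4]
      _ = ρ a (piD f) := by rw [hφa₀, one_smul]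
      _ = φ a * ρ a₀ (piD f) := key _ a
      _ = φ a * ((ρ a₀).comp piD) f := rfl
  · show ρ a₀ (piD φ) = 1
    rw [hpiD_eq, hρπ a₀, hφa₀]
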